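/- Let A be a finite set, θ : A → ℝ, and define the softmax π(a) = exp(θ(a)) / ∑_{a'} exp(θ(a')). Fix a₀ ∈ A with |A| ≥ 2, and define θ'(a₀) = θ(a₀) + log(1/π(a₀)) and θ'(a) = θ(a) for a ≠ a₀, with π' the softmax of θ'. Then π'(a₀) - π(a₀) = (1 - π(a₀))² / (2 - π(a₀)). -/

import Mathlib

theorem stmt_5 {A : Type*} [Fintype A] (θ θ' π π' : A → ℝ) (a₀ : A)
    (hcard : 2 ≤ Fintype.card A)
    (hπ : ∀ a, π a = Real.exp (θ a) / ∑ a', Real.exp (θ a'))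
    (hθ'0 : θ' a₀ = θ a₀ + Real.log (1 / π a₀))
    (hθ' : ∀ a ≠ a₀, θ' a = θ a)
    (hπ' : ∀ a, π' a = Real.exp (θ' a) / ∑ a', Real.exp (θ' a')) :
    π' a₀ - π a₀ = (1 - π a₀) ^ 2 / (2 - π a₀) := by
  have hne : Nonempty A := Fintype.card_pos_iff.mp (by omega)
  set S : ℝ := ∑ a', Real.exp (θ a') with hSdef
  have hS : 0 < S := Finset.sum_pos (fun a _ => Real.exp_pos _) Finset.univ_nonempty
  set e₀ : ℝ := Real.exp (θ a₀) with he₀def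
  have he₀ : 0 < e₀ := Real.exp_pos _
  have he₀S : e₀ ≤ S := Finset.single_le_sum (fun a _ => (Real.exp_pos (θ a)).le)
    (Finset.mem_univ a₀)
  have hπ0 : π a₀ = e₀ / S := hπ a₀
  have hexp' : Real.exp (θ' a₀) = S := by
    rw [hθ'0, Real.exp_add, hπ0, one_div, inv_div, Real.exp_log (by positivity)]
    field_simp
    exact he₀def.symm
  have hsum' : (∑ a', Real.exp (θ' a')) = 2 * S - e₀ := by
    have h1 : (∑ a', Real.exp (θ' a')) - S = Real.exp (θ' a₀) - e₀ := by
      rw [hSdef]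
      rw [← Finset.sum_sub_distrib]
      rw [Finset.sum_eq_single a₀]
      · intro b _ hb; rw [hθ' b hb]; ring
      · intro h; exact absurd (Finset.mem_univ a₀) h
    rw [hexp'] at h1; linarith
  have hπ'0 : π' a₀ = S / (2 * S - e₀) := by rw [hπ' a₀, hexp', hsum']
  have h2S : 0 < 2 * S - e₀ := by linarith
  rw [hπ'0, hπ0]
  have h2S' : S * 2 - e₀ ≠ 0 := by linarith
  field_simp
  ring
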